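/- Let (K, val) be a valued field in which every strict unit admits a square root, B its valuation ring, A a subring with B ⊆ A ⊆ K, and ℳ a quasi-quadratic module in A. For g ∈ G define M_g(ℳ) = {p.an(x) : x ∈ ℳ \ {0}, val(x) = g} ∪ {0} ⊆ F. Then: (1) M_g(ℳ) is a quasi-quadratic module in the residue field F for every g ∈ G; (2) if g₁, g₂ ∈ H ∪ G_{≥e} with g₁g₂⁻¹ ∈ H², then M_{g₁}(ℳ) = M_{g₂}(ℳ); (3) if g₁, g₂ ∈ H ∪ G_{≥e} with g₁g₂⁻¹ ∈ G² and g₁ ≤ g₂, then M_{g₁}(ℳ) ⊆ M_{g₂}(ℳ). -/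

import Mathlib

/-- A (multiplicatively written) valuation on a field `K` with value group `G`:
`v` is multiplicative and satisfies the ultrametric inequality on nonzero elements,
and is surjective onto `G`.  The value at `0` is irrelevant (the paper's `∞`). -/
structure MulValuation (K : Type*) [Field K] (G : Type*) [CommGroup G] [LinearOrder G] [IsOrderedMonoid G] where
  v : K → G
  map_mul : ∀ ⦃x y : K⦄, x ≠ 0 → y ≠ 0 → v (x * y) = v x * v y
  min_le_map_add : ∀ ⦃x y : K⦄, x ≠ 0 → y ≠ 0 → x + y ≠ 0 → min (v x) (v y) ≤ v (x + y)
  surj : ∀ g : G, ∃ x : K, x ≠ 0 ∧ v x = g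

namespace MulValuation

variable {K : Type*} [Field K] {G : Type*} [CommGroup G] [LinearOrder G] [IsOrderedMonoid G]

/-- The valuation ring `B = {x : val x ≥ e} ∪ {0}`, as a set. -/
def ringSet (V : MulValuation K G) : Set K := {x : K | x = 0 ∨ 1 ≤ V.v x}

/-- `val(Aˣ)`: the set of values of units of a subring `A` of `K`. -/
def unitVals (V : MulValuation K G) (A : Subring K) : Set G :=
  {g : G | ∃ x : K, x ≠ 0 ∧ x ∈ A ∧ x⁻¹ ∈ A ∧ V.v x = g}

end MulValuation

/-- `π : K → F` is a residue homomorphism for `V`: it is a surjective ring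
homomorphism on the valuation ring, whose nonvanishing locus on the valuation ring
is exactly the set of units of the valuation ring. -/
def MulValuation.IsResidue {K : Type*} [Field K] {G : Type*} [CommGroup G] [LinearOrder G] [IsOrderedMonoid G]
    {F : Type*} [Field F] (V : MulValuation K G) (π : K → F) : Prop :=
  π 0 = 0 ∧ π 1 = 1 ∧
  (∀ x y : K, x ∈ V.ringSet → y ∈ V.ringSet → π (x + y) = π x + π y) ∧
  (∀ x y : K, x ∈ V.ringSet → y ∈ V.ringSet → π (x * y) = π x * π y) ∧
  (∀ x : K, x ≠ 0 → x ∈ V.ringSet → (π x ≠ 0 ↔ V.v x = 1)) ∧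
  (∀ c : F, ∃ x ∈ V.ringSet, π x = c)

/-- `pan` is a pseudo-angular component map for `V` (with residue map `π`),
i.e. it satisfies conditions (1)-(6) of the paper (stated on nonzero elements). -/
def MulValuation.IsPseudoAngular {K : Type*} [Field K] {G : Type*} [CommGroup G] [LinearOrder G] [IsOrderedMonoid G]
    {F : Type*} [Field F] (V : MulValuation K G) (π : K → F) (pan : K → F) : Prop :=
  (∀ x : K, x ≠ 0 → pan x ≠ 0) ∧
  (∀ u : K, u ≠ 0 → V.v u = 1 → pan u = π u) ∧
  (∀ u x : K, u ≠ 0 → V.v u = 1 → x ≠ 0 → pan (u * x) = π u * pan x) ∧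
  (∀ (g : G) (c : F), c ≠ 0 → ∃ w : K, w ≠ 0 ∧ V.v w = g ∧ pan w = c) ∧
  (∀ x₁ x₂ : K, x₁ ≠ 0 → x₂ ≠ 0 → x₁ + x₂ ≠ 0 →
    (V.v x₁ < V.v x₂ → pan (x₁ + x₂) = pan x₁) ∧
    (V.v x₁ = V.v x₂ → pan x₁ + pan x₂ ≠ 0 →
      V.v (x₁ + x₂) = V.v x₁ ∧ pan (x₁ + x₂) = pan x₁ + pan x₂)) ∧
  (∀ x y : K, x ≠ 0 → y ≠ 0 → (∃ u : G, V.v x * (V.v y)⁻¹ = u ^ 2) → pan x = pan y →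
    ∃ u : K, u ≠ 0 ∧ y = u ^ 2 * x) ∧
  (∀ a u : K, a ≠ 0 → u ≠ 0 → ∃ k : F, k ≠ 0 ∧ pan (a * u ^ 2) = pan a * k ^ 2)

/-- `M_g(ℳ)`: the quasi-quadratic module of the residue field generated by `ℳ` and `g`. -/
def MulValuation.Mg {K : Type*} [Field K] {G : Type*} [CommGroup G] [LinearOrder G] [IsOrderedMonoid G]
    {F : Type*} [Field F] (V : MulValuation K G) (pan : K → F) (M : Set K) (g : G) : Set F :=
  {c : F | ∃ x : K, x ≠ 0 ∧ x ∈ M ∧ V.v x = g ∧ pan x = c} ∪ {0}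

private lemma aux_sq_inj {G : Type*} [CommGroup G] [LinearOrder G] [IsOrderedMonoid G] {a b : G}
    (h : a ^ 2 = b ^ 2) : a = b := by
  rcases lt_trichotomy a b with h' | h' | h'
  · have := mul_lt_mul_of_lt_of_lt h' h'
    rw [← pow_two, ← pow_two, h] at this
    exact absurd this (lt_irrefl _)
  · exact h'
  · have := mul_lt_mul_of_lt_of_lt h' h'
    rw [← pow_two, ← pow_two, h] at this
    exact absurd this (lt_irrefl _)

private lemma aux_one_le_of_sq {G : Type*} [CommGroup G] [LinearOrder G] [IsOrderedMonoid G] {a : G}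
    (h : 1 ≤ a ^ 2) : 1 ≤ a := by
  by_contra h'
  push_neg at h'
  have := mul_lt_mul_of_lt_of_lt h' h'
  rw [← pow_two, one_mul] at this
  exact absurd (lt_of_le_of_lt h this) (lt_irrefl _)

theorem stmt13 {K : Type*} [Field K] {G : Type*} [CommGroup G] [LinearOrder G] [IsOrderedMonoid G]
    {F : Type*} [Field F] (V : MulValuation K G) (π : K → F)
    (hres : V.IsResidue π)
    (hsqrt : ∀ x : K, x ≠ 0 → V.v x = 1 → π x = 1 → ∃ y : K, x = y ^ 2)
    (pan : K → F) (hpan : V.IsPseudoAngular π pan)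
    (A : Subring K) (hBA : V.ringSet ⊆ (A : Set K))
    (M : Set K) (hMA : M ⊆ (A : Set K)) (h0 : (0 : K) ∈ M)
    (hadd : ∀ x ∈ M, ∀ y ∈ M, x + y ∈ M)
    (hsq : ∀ a : K, a ∈ A → ∀ x ∈ M, a ^ 2 * x ∈ M) :
    -- (1) each `M_g(ℳ)` is a quasi-quadratic module in `F`
    (∀ g : G,
      (0 : F) ∈ V.Mg pan M g ∧
      (∀ c ∈ V.Mg pan M g, ∀ d ∈ V.Mg pan M g, c + d ∈ V.Mg pan M g) ∧
      (∀ a : F, ∀ c ∈ V.Mg pan M g, a ^ 2 * c ∈ V.Mg pan M g)) ∧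
    -- (2)
    (∀ g₁ g₂ : G, (g₁ ∈ V.unitVals A ∨ 1 ≤ g₁) → (g₂ ∈ V.unitVals A ∨ 1 ≤ g₂) →
      (∃ h ∈ V.unitVals A, g₁ * g₂⁻¹ = h ^ 2) → V.Mg pan M g₁ = V.Mg pan M g₂) ∧
    -- (3)
    (∀ g₁ g₂ : G, (g₁ ∈ V.unitVals A ∨ 1 ≤ g₁) → (g₂ ∈ V.unitVals A ∨ 1 ≤ g₂) →
      (∃ u : G, g₁ * g₂⁻¹ = u ^ 2) → g₁ ≤ g₂ → V.Mg pan M g₁ ⊆ V.Mg pan M g₂) := by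
  obtain ⟨hπ0, hπ1, hπadd, hπmul, hπne, hπsurj⟩ := hres
  obtain ⟨hpan0, hpanres, hpanmul, hpanex, hpanadd, hpansq, -⟩ := hpan
  have hv1 : V.v 1 = 1 := by
    have h1 := V.map_mul (one_ne_zero : (1:K) ≠ 0) one_ne_zero
    rw [mul_one] at h1
    exact (right_eq_mul.mp h1)
  have hvinv : ∀ x : K, x ≠ 0 → V.v x⁻¹ = (V.v x)⁻¹ := by
    intro x hx
    have h1 := V.map_mul hx (inv_ne_zero hx)
    rw [mul_inv_cancel₀ hx, hv1] at h1
    exact eq_inv_of_mul_eq_one_right h1.symm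
  have hvneg1 : V.v (-1 : K) = 1 := by
    have h1 := V.map_mul (neg_ne_zero.mpr (one_ne_zero : (1:K) ≠ 0))
      (neg_ne_zero.mpr one_ne_zero)
    rw [neg_mul_neg, one_mul, hv1] at h1
    exact aux_sq_inj (a := V.v (-1:K)) (b := 1) (by rw [pow_two, one_pow]; exact h1.symm)
  have hmem1 : (1:K) ∈ V.ringSet := Or.inr hv1.ge
  have hmemneg1 : (-1:K) ∈ V.ringSet := Or.inr hvneg1.ge
  have hπneg1 : π (-1 : K) = -1 := by
    have h1 := hπadd 1 (-1) hmem1 hmemneg1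
    rw [add_neg_cancel, hπ0, hπ1] at h1
    exact eq_neg_of_add_eq_zero_right h1.symm
  have hpanneg : ∀ x : K, x ≠ 0 → pan (-x) = - pan x := by
    intro x hx
    have h1 := hpanmul (-1) x (neg_ne_zero.mpr one_ne_zero) hvneg1 hx
    rw [neg_one_mul] at h1
    rw [h1, hπneg1, neg_one_mul]
  -- being a unit of `A` propagates along equal valuations
  have unitA : ∀ b u : K, b ≠ 0 → u ≠ 0 → b ∈ A → b⁻¹ ∈ A → V.v u = V.v b → u ∈ A := by
    intro b u hb0 hu0 hbA hbiA hv
    have hvub : V.v (u * b⁻¹) = 1 := by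
      rw [V.map_mul hu0 (inv_ne_zero hb0), hvinv b hb0, hv, mul_inv_cancel]
    have hubA : u * b⁻¹ ∈ A := hBA (Or.inr hvub.ge)
    have heq : u = u * b⁻¹ * b := by field_simp
    rw [heq]; exact mul_mem hubA hbA
  -- the key inclusion lemma
  have key : ∀ g₁ g₂ : G, (∃ s : G, g₁ * g₂⁻¹ = s ^ 2) →
      (∀ u : K, u ≠ 0 → (V.v u) ^ 2 = g₂ * g₁⁻¹ → u ∈ A) →
      V.Mg pan M g₁ ⊆ V.Mg pan M g₂ := by
    intro g₁ g₂ hsqG hA c hc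
    rcases hc with ⟨x, hx0, hxM, hvx, hpx⟩ | rfl
    · have hc0 : c ≠ 0 := hpx ▸ hpan0 x hx0
      obtain ⟨w, hw0, hvw, hpw⟩ := hpanex g₂ c hc0
      obtain ⟨u, hu0, hwu⟩ := hpansq x w hx0 hw0 (by rw [hvx, hvw]; exact hsqG)
        (by rw [hpx, hpw])
      have hvu2 : (V.v u) ^ 2 = g₂ * g₁⁻¹ := by
        have h1 : V.v w = V.v u ^ 2 * V.v x := by
          rw [hwu, V.map_mul (pow_ne_zero 2 hu0) hx0, pow_two, pow_two, V.map_mul hu0 hu0]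
        rw [hvx, hvw] at h1
        rw [h1, mul_inv_cancel_right]
      have huA : u ∈ A := hA u hu0 hvu2
      refine Set.mem_union_left _ ⟨w, hw0, ?_, hvw, hpw⟩
      rw [hwu]; exact hsq u huA x hxM
    · exact Set.mem_union_right _ rfl
  refine ⟨?_, ?_, ?_⟩
  · -- (1)
    intro g
    refine ⟨Set.mem_union_right _ rfl, ?_, ?_⟩
    · intro c hc d hd
      rcases hc with ⟨x, hx0, hxM, hvx, hpx⟩ | rfl
      · rcases hd with ⟨y, hy0, hyM, hvy, hpy⟩ | rfl
        · by_cases hcd : pan x + pan y = 0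
          · rw [← hpx, ← hpy, hcd]
            exact Set.mem_union_right _ rfl
          · have hxy0 : x + y ≠ 0 := by
              intro h
              apply hcd
              have hy : y = -x := eq_neg_of_add_eq_zero_right h
              rw [hy, hpanneg x hx0]; ring
            obtain ⟨hvxy, hpxy⟩ := (hpanadd x y hx0 hy0 hxy0).2 (by rw [hvx, hvy]) hcd
            exact Set.mem_union_left _ ⟨x + y, hxy0, hadd x hxM y hyM,
              by rw [hvxy, hvx], by rw [hpxy, hpx, hpy]⟩
        · rw [add_zero]
          exact Set.mem_union_left _ ⟨x, hx0, hxM, hvx, hpx⟩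
      · rw [zero_add]; exact hd
    · intro a c hc
      rcases hc with ⟨x, hx0, hxM, hvx, hpx⟩ | rfl
      · by_cases ha : a = 0
        · refine Set.mem_union_right _ ?_
          simp [ha, Set.mem_singleton_iff]
        · obtain ⟨w, hwB, hπw⟩ := hπsurj a
          have hw0 : w ≠ 0 := by
            intro h; rw [h, hπ0] at hπw; exact ha hπw.symm
          have hvw : V.v w = 1 := (hπne w hw0 hwB).mp (by rw [hπw]; exact ha)
          have hw2 : V.v (w ^ 2) = 1 := by
            rw [pow_two, V.map_mul hw0 hw0, hvw, mul_one]
          have hmul := hpanmul (w ^ 2) x (pow_ne_zero 2 hw0) hw2 hx0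
          have hπw2 : π (w ^ 2) = a ^ 2 := by
            rw [pow_two, hπmul w w hwB hwB, hπw, ← pow_two]
          refine Set.mem_union_left _ ⟨w ^ 2 * x, mul_ne_zero (pow_ne_zero 2 hw0) hx0,
            hsq w (hBA hwB) x hxM, ?_, ?_⟩
          · rw [V.map_mul (pow_ne_zero 2 hw0) hx0, hw2, one_mul, hvx]
          · rw [hmul, hπw2, hpx]
      · refine Set.mem_union_right _ ?_
        simp [Set.mem_singleton_iff]
  · -- (2)
    intro g₁ g₂ _ _ ⟨h, ⟨b, hb0, hbA, hbiA, hvb⟩, heq⟩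
    have h2 : g₂ * g₁⁻¹ = (h⁻¹) ^ 2 := by rw [inv_pow, ← heq]; group
    apply Set.Subset.antisymm
    · refine key g₁ g₂ ⟨h, heq⟩ ?_
      intro u hu0 hvu2
      have hvu : V.v u = h⁻¹ := aux_sq_inj (by rw [hvu2, h2])
      refine unitA b⁻¹ u (inv_ne_zero hb0) hu0 hbiA (by rwa [inv_inv]) ?_
      rw [hvinv b hb0, hvb, hvu]
    · refine key g₂ g₁ ⟨h⁻¹, h2⟩ ?_
      intro u hu0 hvu2
      have hvu : V.v u = h := aux_sq_inj (by rw [hvu2, heq])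
      exact unitA b u hb0 hu0 hbA hbiA (by rw [hvb, hvu])
  · -- (3)
    intro g₁ g₂ _ _ hsqG hle
    refine key g₁ g₂ hsqG ?_
    intro u hu0 hvu2
    have hone : (1 : G) ≤ g₂ * g₁⁻¹ := by
      have := mul_le_mul_left hle g₁⁻¹
      rwa [mul_inv_cancel] at this
    have : (1 : G) ≤ V.v u := aux_one_le_of_sq (by rw [hvu2]; exact hone)
    exact hBA (Or.inr this)
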